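/- For all natural numbers m, n, w, d, a, m', w' with a ≥ 1, a·m' ≤ m, a·w' ≤ w, and w ≤ a·w' + m − a·m', we have A(m, n, w, d) ≥ A(m', a·n, w', d). -/

import Mathlib

open Finset

/-- Total Hamming distance between two words in `J(m,w)^n`:
the number of positions (among all `m·n` entries) in which they differ. -/
def arrDist {m n : ℕ} (X Y : Fin n → Fin m → ZMod 2) : ℕ :=
  ∑ k, hammingDist (X k) (Y k)

/-- `C` is a constant-weight array code in `J(m,w)^n` with minimum distance `2d`. -/
def isCWAC (m n w d : ℕ) (C : Finset (Fin n → Fin m → ZMod 2)) : Prop :=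
  C.Nonempty ∧ (∀ X ∈ C, ∀ k, hammingNorm (X k) = w) ∧
    ∀ X ∈ C, ∀ Y ∈ C, X ≠ Y → 2 * d ≤ arrDist X Y

/-- Maximum cardinality of a CWAC in `J(m,w)^n` with minimum Hamming distance `2d`. -/
noncomputable def Amax (m n w d : ℕ) : ℕ :=
  sSup { c | ∃ C : Finset (Fin n → Fin m → ZMod 2), isCWAC m n w d C ∧ C.card = c }

/-- Maximum cardinality of an anticode in `J(m,w)^n` with diameter `2δ`. -/
noncomputable def alphaMax (m n w δ : ℕ) : ℕ :=
  sSup { c | ∃ C : Finset (Fin n → Fin m → ZMod 2), C.Nonempty ∧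
    (∀ X ∈ C, ∀ k, hammingNorm (X k) = w) ∧
    (∀ X ∈ C, ∀ Y ∈ C, arrDist X Y ≤ 2 * δ) ∧ C.card = c }

/-- Maximum cardinality of a binary constant-weight code in `J(n,w)` with
minimum Hamming distance `2d`. -/
noncomputable def Bmax (n w d : ℕ) : ℕ :=
  sSup { c | ∃ C : Finset (Fin n → ZMod 2), C.Nonempty ∧
    (∀ x ∈ C, hammingNorm x = w) ∧
    (∀ x ∈ C, ∀ y ∈ C, x ≠ y → 2 * d ≤ hammingDist x y) ∧ C.card = c }

/-- Maximum cardinality of a nonrestricted `q`-ary code of length `n` with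
minimum Hamming distance `d`. -/
noncomputable def Cmax (q n d : ℕ) : ℕ :=
  sSup { c | ∃ C : Finset (Fin n → Fin q), C.Nonempty ∧
    (∀ x ∈ C, ∀ y ∈ C, x ≠ y → d ≤ hammingDist x y) ∧ C.card = c }

/-- `ν(i)`: the number of vectors of weight `u` at Hamming distance `i` from a
fixed vector of weight `w` in `GF(2)^m`. -/
def nuF (m w u : ℕ) (i : ℕ) : ℕ :=
  if (u + w - i) % 2 = 0 ∧ i ≤ u + w ∧ w ≤ u + i then
    Nat.choose w ((u + w - i) / 2) * Nat.choose (m - w) ((u + i - w) / 2)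
  else 0

lemma hammingDist_eq_sum' {ι γ : Type*} [Fintype ι] [DecidableEq γ] (x y : ι → γ) :
    hammingDist x y = ∑ i, if x i ≠ y i then 1 else 0 := by
  rw [hammingDist, Finset.card_filter]

lemma hammingNorm_eq_sum' {ι γ : Type*} [Fintype ι] [DecidableEq γ] [Zero γ] (x : ι → γ) :
    hammingNorm x = ∑ i, if x i ≠ 0 then 1 else 0 := by
  rw [hammingNorm, Finset.card_filter]

lemma sum_ite_lt (N tt : ℕ) (h : tt ≤ N) :
    ∑ j : Fin N, (if (j : ℕ) < tt then 1 else 0) = tt := by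
  rw [Fin.sum_univ_eq_sum_range (fun j => if j < tt then 1 else 0), ← Finset.card_filter]
  have : (Finset.range N).filter (· < tt) = Finset.range tt := by
    ext j; simp only [Finset.mem_filter, Finset.mem_range]; omega
  rw [this, Finset.card_range]

theorem Amax_embedding (m n w d a m' w' : ℕ)
    (ha : 1 ≤ a) (hm : a * m' ≤ m) (hw : a * w' ≤ w) (hw2 : w ≤ a * w' + m - a * m') :
    Amax m' (a * n) w' d ≤ Amax m n w d := by
  unfold Amax
  apply csSup_le_csSup'
  · exact ⟨Fintype.card (Fin n → Fin m → ZMod 2), by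
      rintro c ⟨C, _, rfl⟩
      simpa using Finset.card_le_univ C⟩
  rintro c ⟨C, ⟨hne, hwt, hdist⟩, rfl⟩
  set t := w - a * w' with ht
  have htle : t ≤ m - a * m' := by omega
  have hE : a * m' + (m - a * m') = m := by omega
  let E : (Fin a × Fin m') ⊕ Fin (m - a * m') ≃ Fin m :=
    (Equiv.sumCongr finProdFinEquiv (Equiv.refl _)).trans (finSumFinEquiv.trans (finCongr hE))
  let G : Fin a × Fin n ≃ Fin (a * n) := finProdFinEquiv
  let pad : Fin (m - a * m') → ZMod 2 := fun j => if (j : ℕ) < t then 1 else 0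
  let f : (Fin (a * n) → Fin m' → ZMod 2) → (Fin n → Fin m → ZMod 2) :=
    fun X k => (Sum.elim (fun p : Fin a × Fin m' => X (G (p.1, k)) p.2) pad) ∘ E.symm
  have key : ∀ (Z : Fin (a * n) → Fin m' → ZMod 2) (k : Fin n) (q : Fin a) (r : Fin m'),
      f Z k (E (Sum.inl (q, r))) = Z (G (q, k)) r := by
    intro Z k q r; simp [f]
  have hinj : Function.Injective f := by
    intro X Y hXY
    funext k' r
    have h1 := congrFun (congrFun hXY (G.symm k').2) (E (Sum.inl ((G.symm k').1, r)))
    rw [key, key] at h1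
    simpa using h1
  have hnorm : ∀ X ∈ C, ∀ k, hammingNorm (f X k) = w := by
    intro X hX k
    rw [hammingNorm_eq_sum']
    simp only [f, Function.comp_apply]
    rw [Equiv.sum_comp E.symm (fun s => if Sum.elim
        (fun p : Fin a × Fin m' => X (G (p.1, k)) p.2) pad s ≠ 0 then 1 else 0)]
    rw [Fintype.sum_sum_type]
    simp only [Sum.elim_inl, Sum.elim_inr]
    have h1 : ∑ p : Fin a × Fin m', (if X (G (p.1, k)) p.2 ≠ 0 then 1 else 0) = a * w' := by
      rw [Fintype.sum_prod_type]
      have h0 : ∀ q : Fin a, ∑ r : Fin m', (if X (G (q, k)) r ≠ 0 then 1 else 0) = w' := by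
        intro q; rw [← hammingNorm_eq_sum']; exact hwt X hX _
      rw [Finset.sum_congr rfl (fun q _ => h0 q)]
      simp [Finset.sum_const, mul_comm]
    have h2 : ∑ j : Fin (m - a * m'), (if pad j ≠ 0 then 1 else 0) = t := by
      have hp : ∀ j : Fin (m - a * m'), (if pad j ≠ 0 then 1 else 0)
          = if (j : ℕ) < t then 1 else 0 := by
        intro j
        by_cases h : (j : ℕ) < t <;> simp [pad, h]
      rw [Finset.sum_congr rfl (fun j _ => hp j)]
      exact sum_ite_lt _ _ htle
    exact Eq.trans (congrArg₂ HAdd.hAdd h1 h2) (by omega)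
  have hdistf : ∀ X Y : Fin (a * n) → Fin m' → ZMod 2,
      arrDist (f X) (f Y) = arrDist X Y := by
    intro X Y
    unfold arrDist
    have hk : ∀ k, hammingDist (f X k) (f Y k)
        = ∑ q : Fin a, hammingDist (X (G (q, k))) (Y (G (q, k))) := by
      intro k
      rw [hammingDist_eq_sum']
      simp only [f, Function.comp_apply]
      rw [Equiv.sum_comp E.symm (fun s => if Sum.elim
          (fun p : Fin a × Fin m' => X (G (p.1, k)) p.2) pad s ≠ Sum.elim
          (fun p : Fin a × Fin m' => Y (G (p.1, k)) p.2) pad s then 1 else 0)]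
      rw [Fintype.sum_sum_type]
      simp only [Sum.elim_inl, Sum.elim_inr]
      have h2 : ∑ j : Fin (m - a * m'), (if pad j ≠ pad j then 1 else 0) = 0 := by simp
      refine Eq.trans (congrArg₂ HAdd.hAdd rfl h2) ?_
      rw [add_zero, Fintype.sum_prod_type]
      exact Finset.sum_congr rfl fun q _ =>
        (hammingDist_eq_sum' (X (G (q, k))) (Y (G (q, k)))).symm
    simp only [hk]
    rw [Finset.sum_comm, ← Fintype.sum_prod_type']
    exact Fintype.sum_equiv G _ _ (fun p => rfl)
  refine ⟨C.image f, ⟨hne.image f, ?_, ?_⟩, Finset.card_image_of_injective C hinj⟩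
  · rintro Y hY k
    obtain ⟨X, hX, rfl⟩ := Finset.mem_image.mp hY
    exact hnorm X hX k
  · rintro Y1 h1 Y2 h2 hne'
    obtain ⟨X1, hX1, rfl⟩ := Finset.mem_image.mp h1
    obtain ⟨X2, hX2, rfl⟩ := Finset.mem_image.mp h2
    rw [hdistf]
    exact hdist X1 hX1 X2 hX2 (fun h => hne' (congrArg f h))
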